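/- Let q be a negative integer and s a nonnegative integer. Then Res_x Σ_{i=0}^{s} C(q,i) (1+x)^{-q-1} / x^{-q+i} = 1, where Res_x extracts the coefficient of x^{-1} of a formal Laurent series and C(q,i) = q(q-1)···(q-i+1)/i! is the generalized binomial coefficient. Equivalently, Σ_{i=0}^{s} C(q,i)·C(-q-1, -q+i-1) = 1. -/

import Mathlib

open Finset in
/-- The generalized binomial coefficient `C(α,i) = α(α-1)⋯(α-i+1)/i!`. -/
def genChoose (α : ℚ) (i : ℕ) : ℚ := (∏ j ∈ Finset.range i, (α - j)) / (Nat.factorial i)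

open Finset in
/-- For a negative integer `q` and `s ∈ ℕ`,
`Res_x Σ_{i=0}^{s} C(q,i) (1+x)^{-q-1}/x^{-q+i} = 1`, i.e.
`Σ_{i=0}^{s} C(q,i)·C(-q-1, -q+i-1) = 1`. -/
theorem stmt8 (q : ℤ) (hq : q < 0) (s : ℕ) :
    ∑ i ∈ range (s + 1),
      genChoose (q : ℚ) i * ((Nat.choose (-q - 1).toNat (-q + i - 1).toNat : ℕ) : ℚ) = 1 := by
  rw [Finset.sum_eq_single 0]
  · have h0 : (-q + (0:ℕ) - 1).toNat = (-q - 1).toNat := by omega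
    rw [h0, Nat.choose_self]
    simp [genChoose]
  · intro i _ hi
    have hi1 : 1 ≤ i := Nat.one_le_iff_ne_zero.mpr hi
    have : (-q - 1).toNat < (-q + i - 1).toNat := by omega
    rw [Nat.choose_eq_zero_of_lt this]
    simp
  · intro h
    exact absurd (Finset.mem_range.mpr (Nat.succ_pos s)) h
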